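/- Hitting lemma: let C : {0,1}^n → {0,1}^m be a (q,δ,ε) insdel LDC with a non-adaptive decoder Dec, and let C'(x) ∈ {0,1}^{2m} denote the augmented codeword obtained by appending m padding bits to C(x) (the padding bits may be random, with randomness independent of x). Let 𝒟 be any distribution over deletion sets D ⊆ [2m] such that every D in the support of 𝒟 satisfies |D ∩ [m]| ≤ δm and |D| ≤ m. Then for every i ∈ [n], the probability over D ∼ 𝒟 and over the query Q of Dec(·, m, i) that Q^D ∈ Good_i is at least 3ε/2. -/

import Mathlib

open scoped ENNReal Classical

/-- Cost structure for edit distance (formerly in Mathlib, `Mathlib.Data.List.EditDistance.Defs`). -/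
structure Levenshtein.Cost (α β δ : Type) where
  delete : α → δ
  insert : β → δ
  substitute : α → β → δ

/-- (Implementation detail for `levenshtein`, formerly in Mathlib.) -/
def Levenshtein.impl {α β δ : Type} [AddZeroClass δ] [Min δ]
    (C : Levenshtein.Cost α β δ)
    (xs : List α) (y : β) (d : {r : List δ // 0 < r.length}) : {r : List δ // 0 < r.length} :=
  let ⟨ds, w⟩ := d
  xs.zip (ds.zip ds.tail) |>.foldr
    (init := ⟨[C.insert y + ds.getLast (List.length_pos_iff_ne_nil.mp w)], by simp⟩)
    (fun ⟨x, d₀, d₁⟩ ⟨r, w⟩ =>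
      ⟨min (C.delete x + r[0]) (min (C.insert y + d₀) (C.substitute x y + d₁)) :: r, by simp⟩)

/-- `suffixLevenshtein C xs ys` computes the Levenshtein distance
(using the cost functions provided by `C`) between each suffix of `xs` and `ys`
(formerly in Mathlib). -/
def suffixLevenshtein {α β δ : Type} [AddZeroClass δ] [Min δ]
    (C : Levenshtein.Cost α β δ) (xs : List α) (ys : List β) :
    {r : List δ // 0 < r.length} :=
  ys.foldr
    (Levenshtein.impl C xs)
    (xs.foldr (init := ⟨[0], by simp⟩) (fun a ⟨ds, w⟩ => ⟨(C.delete a + ds[0]) :: ds, by simp⟩))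

/-- The Levenshtein distance with cost functions `C` (formerly in Mathlib). -/
def levenshtein {α β δ : Type} [AddZeroClass δ] [Min δ]
    (C : Levenshtein.Cost α β δ) (xs : List α) (ys : List β) : δ :=
  let ⟨r, w⟩ := suffixLevenshtein C xs ys
  r[0]


theorem lev_impl_cons {α β δ : Type} [AddZeroClass δ] [Min δ] (C : Levenshtein.Cost α β δ)
    (x : α) (xs : List α) (y : β) (d : δ) (ds : List δ) (w : 0 < (d :: ds).length)
    (w' : 0 < List.length ds) :
    Levenshtein.impl C (x :: xs) y ⟨d :: ds, w⟩ =
      let ⟨r, w⟩ := Levenshtein.impl C xs y ⟨ds, w'⟩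
      ⟨min (C.delete x + r[0]) (min (C.insert y + d) (C.substitute x y + ds[0])) :: r, by simp⟩ :=
  match ds, w' with | _ :: _, _ => rfl

theorem lev_impl_cons_fst_zero {α β δ : Type} [AddZeroClass δ] [Min δ]
    (C : Levenshtein.Cost α β δ)
    (x : α) (xs : List α) (y : β) (d : δ) (ds : List δ) (w : 0 < (d :: ds).length) (h)
    (w' : 0 < List.length ds) :
    (Levenshtein.impl C (x :: xs) y ⟨d :: ds, w⟩).1[0]'h =
      let ⟨r, w⟩ := Levenshtein.impl C xs y ⟨ds, w'⟩
      min (C.delete x + r[0]) (min (C.insert y + d) (C.substitute x y + ds[0])) :=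
  match ds, w' with | _ :: _, _ => rfl

theorem lev_impl_length {α β δ : Type} [AddZeroClass δ] [Min δ] (C : Levenshtein.Cost α β δ)
    (xs : List α) (y : β) (d : {r : List δ // 0 < r.length}) (w : d.1.length = xs.length + 1) :
    (Levenshtein.impl C xs y d).1.length = xs.length + 1 := by
  induction xs generalizing d with
  | nil => rfl
  | cons x xs ih =>
    dsimp [Levenshtein.impl]
    match d, w with
    | ⟨d₁ :: d₂ :: ds, _⟩, w =>
      dsimp
      congr 1
      exact ih ⟨d₂ :: ds, (by simp)⟩ (by simpa using w)

theorem lev_suffixLevenshtein_length {α β δ : Type} [AddZeroClass δ] [Min δ]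
    (C : Levenshtein.Cost α β δ) (xs : List α) (ys : List β) :
    (suffixLevenshtein C xs ys).1.length = xs.length + 1 := by
  induction ys with
  | nil =>
    dsimp [suffixLevenshtein]
    induction xs with
    | nil => rfl
    | cons _ xs ih =>
      simp_all
  | cons y ys ih =>
    dsimp [suffixLevenshtein]
    rw [lev_impl_length]
    exact ih

theorem lev_suffixLevenshtein_cons₂ {α β δ : Type} [AddZeroClass δ] [Min δ]
    (C : Levenshtein.Cost α β δ) (xs : List α) (y : β) (ys : List β) :
    suffixLevenshtein C xs (y :: ys) = (Levenshtein.impl C xs) y (suffixLevenshtein C xs ys) :=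
  rfl

theorem lev_cons₁_aux {α : Type} {x y : {r : List α // 0 < r.length}}
    (w₀ : x.1[0]'x.2 = y.1[0]'y.2) (w : x.1.tail = y.1.tail) : x = y := by
  match x, y with
  | ⟨hx :: tx, _⟩, ⟨hy :: ty, _⟩ => simp_all

theorem lev_suffixLevenshtein_cons₁ {α β δ : Type} [AddZeroClass δ] [Min δ]
    (C : Levenshtein.Cost α β δ) (x : α) (xs : List α) (ys : List β) :
    suffixLevenshtein C (x :: xs) ys =
      ⟨levenshtein C (x :: xs) ys :: (suffixLevenshtein C xs ys).1, by simp⟩ := by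
  induction ys with
  | nil =>
    rfl
  | cons y ys ih =>
    apply lev_cons₁_aux
    · rfl
    · rw [lev_suffixLevenshtein_cons₂ C (x :: xs), ih, lev_impl_cons]
      · rfl
      · simp [lev_suffixLevenshtein_length]

theorem levenshtein_nil_nil {α β δ : Type} [AddZeroClass δ] [Min δ]
    (C : Levenshtein.Cost α β δ) : levenshtein C ([] : List α) ([] : List β) = 0 := by
  simp [levenshtein, suffixLevenshtein]

theorem levenshtein_nil_cons {α β δ : Type} [AddZeroClass δ] [Min δ]
    (C : Levenshtein.Cost α β δ) (y : β) (ys : List β) :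
    levenshtein C ([] : List α) (y :: ys) = C.insert y + levenshtein C [] ys := by
  have hl := lev_suffixLevenshtein_length C ([] : List α) ys
  show C.insert y + (suffixLevenshtein C [] ys).1.getLast _
    = C.insert y + (suffixLevenshtein C [] ys).1[0]'(suffixLevenshtein C [] ys).2
  congr 1
  have key : ∀ (r : List δ) (h1 : r ≠ []) (h2 : 0 < r.length), r.length = 1 →
      r.getLast h1 = r[0]'h2 := by
    intro r h1 h2 hr
    match r, hr with
    | [a], _ => rfl
  exact key _ _ _ (by simpa using hl)

theorem levenshtein_cons_nil {α β δ : Type} [AddZeroClass δ] [Min δ]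
    (C : Levenshtein.Cost α β δ) (x : α) (xs : List α) :
    levenshtein C (x :: xs) ([] : List β) = C.delete x + levenshtein C xs [] :=
  rfl

theorem levenshtein_cons_cons {α β δ : Type} [AddZeroClass δ] [Min δ]
    (C : Levenshtein.Cost α β δ) (x : α) (xs : List α) (y : β) (ys : List β) :
    levenshtein C (x :: xs) (y :: ys) =
      min (C.delete x + levenshtein C xs (y :: ys))
        (min (C.insert y + levenshtein C (x :: xs) ys)
          (C.substitute x y + levenshtein C xs ys)) := by
  show (suffixLevenshtein C (x :: xs) (y :: ys)).1[0]'(by simp [lev_suffixLevenshtein_length]) = _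
  conv =>
    lhs
    dsimp only [lev_suffixLevenshtein_cons₂]
  simp only [lev_suffixLevenshtein_cons₁]
  rw [lev_impl_cons_fst_zero]
  rfl

/-- Cost structure for insertion/deletion edit distance: a substitution costs `2`
(one deletion plus one insertion). -/
def insdelCost {α : Type} [DecidableEq α] : Levenshtein.Cost α α ℕ where
  delete _ := 1
  insert _ := 1
  substitute a b := if a = b then 0 else 2

/-- `ED u v` is the minimum number of insertions and deletions of single symbols
needed to transform `u` into `v`. -/
def ED {α : Type} [DecidableEq α] (u v : List α) : ℕ := levenshtein insdelCost u v

/-- The probability that a non-adaptive `q`-query decoder, run on received word `y`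
with target index `i`, outputs the symbol `b`.  A (randomized) non-adaptive decoder is,
for each received length `m'` and each target index `i`, a probability distribution over
pairs `(S, f)` where `S` is a `q`-tuple of positions and `f` maps the queried symbols to
an output; the decoder outputs `f (y_S)` (out-of-range positions read a default symbol). -/
noncomputable def naSuccessProb {β α : Type} [Inhabited α] {q n : ℕ}
    (Dec : ℕ → Fin n → PMF ((Fin q → ℕ) × ((Fin q → α) → β)))
    (y : List α) (i : Fin n) (b : β) : ℝ≥0∞ :=
  (Dec y.length i).toOuterMeasure {p | p.2 (fun j => y.getD (p.1 j) default) = b}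

/-- `C : β^n → α^m` is a `(q, δ, ε)` insdel LDC with a non-adaptive decoder:
some non-adaptive `q`-query decoder recovers each message symbol `x i` with probability
at least `1/2 + ε` from any received word `y` with `ED (C x) y ≤ δ · 2m`. -/
def IsInsdelLDC {β α : Type} [DecidableEq α] [Inhabited α] (q : ℕ) (δ ε : ℝ)
    {n m : ℕ} (C : (Fin n → β) → Fin m → α) : Prop :=
  ∃ Dec : ℕ → Fin n → PMF ((Fin q → ℕ) × ((Fin q → α) → β)),
    ∀ (x : Fin n → β) (y : List α),
      (ED (List.ofFn (C x)) y : ℝ) ≤ δ * (2 * m) →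
      ∀ i : Fin n, ENNReal.ofReal (1 / 2 + ε) ≤ naSuccessProb Dec y i (x i)

/-- `phiD D i` is the original (0-indexed) position of the `(i+1)`-st surviving symbol
after deleting the positions in `D`: the least `i'` such that among positions
`0, …, i'` at least `i+1` survive. -/
noncomputable def phiD (D : Finset ℕ) (i : ℕ) : ℕ :=
  sInf {i' : ℕ | i + 1 ≤ ((Finset.range (i' + 1)).filter fun j => j ∉ D).card}

/-- A `q`-tuple `S` of (0-indexed) positions of the augmented codeword
`C'(x) = C(x) ++ pad ∈ {0,1}^(2m)` (with padding distributed as `P`, independent of the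
uniform message `x`) is *good* for index `i` if some Boolean function `f` of the
queried bits predicts `x i` with probability at least `1/2 + ε/4`. -/
def GoodTup {n m q : ℕ} (C : (Fin n → Bool) → Fin m → Bool)
    (P : PMF (Fin m → Bool)) (ε : ℝ) (i : Fin n) (S : Fin q → ℕ) : Prop :=
  ∃ f : (Fin q → Bool) → Bool,
    ENNReal.ofReal (1 / 2 + ε / 4) ≤
      (((PMF.uniformOfFintype (Fin n → Bool)).bind fun x =>
          P.map fun pad => (x, pad))).toOuterMeasure
        {t | f (fun j => (List.ofFn (C t.1) ++ List.ofFn t.2).getD (S j) false) = t.1 i}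

lemma ED_nil_left {α : Type} [DecidableEq α] (v : List α) : ED [] v = v.length := by
  induction v with
  | nil => simp [ED, levenshtein_nil_nil]
  | cons b v ih => simp [ED, levenshtein_nil_cons, insdelCost] at ih ⊢; omega

lemma ED_cons_le {α : Type} [DecidableEq α] (a : α) (u v : List α) :
    ED (a :: u) v ≤ 1 + ED u v := by
  cases v with
  | nil => simp [ED, levenshtein_cons_nil, insdelCost]
  | cons b v =>
      rw [ED, levenshtein_cons_cons]
      exact le_trans (min_le_left _ _) (le_refl _)

lemma ED_cons_cons_le {α : Type} [DecidableEq α] (a : α) (u v : List α) :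
    ED (a :: u) (a :: v) ≤ ED u v := by
  rw [ED, levenshtein_cons_cons]
  refine le_trans (min_le_right _ _) (le_trans (min_le_right _ _) ?_)
  simp [insdelCost, ED]

lemma ED_sublist_append_le {α : Type} [DecidableEq α] {v u : List α} (h : List.Sublist v u)
    (s : List α) : ED u (v ++ s) ≤ (u.length - v.length) + s.length := by
  induction h with
  | slnil => simpa using (ED_nil_left s).le
  | @cons l₁ l₂ a h ih =>
      have hl := h.length_le
      have h1 := ED_cons_le a l₂ (l₁ ++ s)
      simp only [List.length_cons]
      omega
  | @cons_cons l₁ l₂ a h ih =>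
      have hl := h.length_le
      have h1 := ED_cons_cons_le a l₂ (l₁ ++ s)
      simp only [List.cons_append] at *
      simp only [List.length_cons]
      omega

private lemma count_le (D : Finset ℕ) (t : ℕ) :
    t - D.card ≤ ((Finset.range t).filter fun j => j ∉ D).card := by
  have h1 : ((Finset.range t).filter fun j => j ∉ D).card
      + ((Finset.range t).filter fun j => ¬ j ∉ D).card = t := by
    rw [Finset.card_filter_add_card_filter_not]; simp
  have h2 : ((Finset.range t).filter fun j => ¬ j ∉ D).card ≤ D.card := by
    apply Finset.card_le_card
    intro j hj
    simp only [Finset.mem_filter, not_not] at hj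
    exact hj.2
  omega

private lemma count_mono (D : Finset ℕ) {s t : ℕ} (h : s ≤ t) :
    ((Finset.range s).filter fun j => j ∉ D).card
      ≤ ((Finset.range t).filter fun j => j ∉ D).card :=
  Finset.card_le_card (Finset.filter_subset_filter _ (by simpa using Finset.range_subset_range.2 h))

private lemma count_succ_le (D : Finset ℕ) (t : ℕ) :
    ((Finset.range (t + 1)).filter fun j => j ∉ D).card
      ≤ ((Finset.range t).filter fun j => j ∉ D).card + 1 := by
  rw [Finset.range_add_one, Finset.filter_insert]
  split
  · exact Finset.card_insert_le _ _
  · omega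

private lemma phiD_spec_nonempty (D : Finset ℕ) (i : ℕ) :
    {i' : ℕ | i + 1 ≤ ((Finset.range (i' + 1)).filter fun j => j ∉ D).card}.Nonempty := by
  refine ⟨i + D.card, ?_⟩
  have := count_le D (i + D.card + 1)
  simp only [Set.mem_setOf_eq]
  omega

lemma phiD_mem (D : Finset ℕ) (i : ℕ) :
    i + 1 ≤ ((Finset.range (phiD D i + 1)).filter fun j => j ∉ D).card :=
  Nat.sInf_mem (phiD_spec_nonempty D i)

lemma phiD_min (D : Finset ℕ) {i t : ℕ} (h : t < phiD D i) :
    ((Finset.range (t + 1)).filter fun j => j ∉ D).card < i + 1 := by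
  by_contra hc
  push_neg at hc
  have h2 : phiD D i ≤ t := Nat.sInf_le hc
  omega

lemma phiD_strictMono (D : Finset ℕ) : StrictMono (phiD D) := by
  apply strictMono_nat_of_lt_succ
  intro i
  have hmem : i + 2 ≤ ((Finset.range (phiD D (i + 1) + 1)).filter fun j => j ∉ D).card := by
    have := phiD_mem D (i + 1); omega
  have hp1 : 1 ≤ phiD D (i + 1) := by
    by_contra h
    push_neg at h
    have h0 : phiD D (i + 1) = 0 := by omega
    rw [h0] at hmem
    simp only [Nat.zero_add] at hmem
    have h1 : ((Finset.range 1).filter fun j => j ∉ D).card ≤ 1 :=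
      le_trans (Finset.card_filter_le _ _) (by simp)
    omega
  have hnot : ((Finset.range ((phiD D (i + 1) - 1) + 1)).filter fun j => j ∉ D).card < (i + 1) + 1 :=
    phiD_min D (by omega)
  have heq : (phiD D (i + 1) - 1) + 1 = phiD D (i + 1) := by omega
  rw [heq] at hnot
  have hle := count_succ_le D (phiD D (i + 1))
  -- count (phiD D (i+1)) = i+1, so (phiD D (i+1) - 1) ∈ S_i
  have h3 : phiD D i ≤ phiD D (i + 1) - 1 := by
    apply Nat.sInf_le
    show i + 1 ≤ _
    rw [heq]
    omega
  omega

lemma phiD_lt_of_count (D : Finset ℕ) {k t : ℕ} (h1 : 1 ≤ t)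
    (h : k + 1 ≤ ((Finset.range t).filter fun j => j ∉ D).card) : phiD D k < t := by
  have h2 : phiD D k ≤ t - 1 := by
    apply Nat.sInf_le
    show k + 1 ≤ _
    have : t - 1 + 1 = t := by omega
    rw [this]
    exact h
  omega

-- count at m in terms of |D ∩ [m]|
lemma count_range_eq (D : Finset ℕ) (t : ℕ) :
    ((Finset.range t).filter fun j => j ∉ D).card = t - (D.filter fun j => j < t).card := by
  have h1 : ((Finset.range t).filter fun j => j ∉ D).card
      + ((Finset.range t).filter fun j => ¬ j ∉ D).card = t := by
    rw [Finset.card_filter_add_card_filter_not]; simp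
  have h2 : (Finset.range t).filter (fun j => ¬ j ∉ D) = D.filter fun j => j < t := by
    ext j
    simp [Finset.mem_filter, Finset.mem_range, and_comm]
  rw [h2] at h1
  omega

/-- mapping strictly increasing indices within bounds through `getD` gives a sublist -/
lemma map_getD_sublist {α : Type*} (d : α) :
    ∀ (u : List α) (js : List ℕ), js.Pairwise (· < ·) → (∀ j ∈ js, j < u.length) →
      List.Sublist (js.map fun j => u.getD j d) u := by
  intro u
  induction u with
  | nil =>
      intro js _ hb
      cases js with
      | nil => simp
      | cons j r => exact absurd (hb j (by simp)) (by simp)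
  | cons a u ih =>
      intro js hp hb
      cases js with
      | nil => simp
      | cons j r =>
          have hpr : r.Pairwise (· < ·) := (List.pairwise_cons.1 hp).2
          have hjr : ∀ k ∈ r, j < k := (List.pairwise_cons.1 hp).1
          cases j with
          | zero =>
              have hshift : (r.map fun k => (a :: u).getD k d)
                  = (r.map (· - 1)).map fun k => u.getD k d := by
                rw [List.map_map]
                apply List.map_congr_left
                intro k hk
                have h1 : 1 ≤ k := hjr k hk
                obtain ⟨k', rfl⟩ : ∃ k', k = k' + 1 := ⟨k - 1, by omega⟩
                simp
              have hsub : List.Sublist ((r.map (· - 1)).map fun k => u.getD k d) u := by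
                apply ih
                · rw [List.pairwise_map]
                  refine hpr.imp_of_mem ?_
                  intro x y hx hy hxy
                  have := hjr x hx
                  omega
                · intro j hj
                  simp only [List.mem_map] at hj
                  obtain ⟨k, hk, rfl⟩ := hj
                  have h2 := hb k (by simp [hk])
                  have h3 := hjr k hk
                  simp at h2
                  omega
              simp only [List.map_cons, List.getD_cons_zero]
              rw [hshift]
              exact hsub.cons₂ a
          | succ j' =>
              have h1 : ∀ k ∈ ((j' + 1) :: r), 1 ≤ k := by
                intro k hk
                rcases List.mem_cons.1 hk with rfl | hk
                · omega
                · have := hjr k hk; omega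
              have hshift : (((j' + 1) :: r).map fun k => (a :: u).getD k d)
                  = ((((j' + 1) :: r)).map (· - 1)).map fun k => u.getD k d := by
                rw [List.map_map]
                apply List.map_congr_left
                intro k hk
                have hk1 := h1 k hk
                obtain ⟨k', rfl⟩ : ∃ k'', k = k'' + 1 := ⟨k - 1, by omega⟩
                simp
              rw [hshift]
              refine List.Sublist.cons a ?_
              apply ih
              · rw [List.pairwise_map]
                refine hp.imp_of_mem ?_
                intro x y hx hy hxy
                have := h1 x hx
                omega
              · intro j hj
                simp only [List.mem_map] at hj
                obtain ⟨k, hk, rfl⟩ := hj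
                have h2 := hb k hk
                have h3 := h1 k hk
                simp at h2
                omega

/-- The received word obtained by reading the augmented codeword through `phiD D`. -/
noncomputable def yWord {α : Type} (m : ℕ) (D : Finset ℕ) (L : List α) (d : α) : List α :=
  (List.range m).map fun k => L.getD (phiD D k) d

lemma yWord_length {α : Type} (m : ℕ) (D : Finset ℕ) (L : List α) (d : α) :
    (yWord m D L d).length = m := by simp [yWord]

lemma yWord_getD {α : Type} {m : ℕ} (D : Finset ℕ) (L : List α) (d : α) {k : ℕ}
    (hk : k < m) : (yWord m D L d).getD k d = L.getD (phiD D k) d := by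
  rw [List.getD_eq_getElem _ _ (by simpa [yWord] using hk)]
  simp [yWord]

lemma yWord_ED {α : Type} [DecidableEq α] {m : ℕ} (D : Finset ℕ)
    (hd : (D.filter fun j => j < m).card ≤ m) (u v : List α) (hu : u.length = m) (d : α) :
    ED u (yWord m D (u ++ v) d) ≤ 2 * (D.filter fun j => j < m).card := by
  set c := (D.filter fun j => j < m).card with hc
  have hcount : ((Finset.range m).filter fun j => j ∉ D).card = m - c := by
    rw [count_range_eq]
  have hphi_lt : ∀ k < m - c, phiD D k < m := by
    intro k hk
    exact phiD_lt_of_count D (by omega) (by omega)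
  have hsplit : List.range m = List.range (m - c) ++ (List.range c).map ((m - c) + ·) := by
    rw [← List.range_add]
    congr 1
    omega
  set f : ℕ → α := fun k => (u ++ v).getD (phiD D k) d with hf
  have hyw : yWord m D (u ++ v) d
      = (List.range (m - c)).map f ++ ((List.range c).map ((m - c) + ·)).map f := by
    rw [yWord, hsplit, List.map_append]
  set A := (List.range (m - c)).map f with hA
  set B := ((List.range c).map ((m - c) + ·)).map f with hB
  have hAeq : A = ((List.range (m - c)).map (phiD D)).map fun j => u.getD j d := by
    rw [List.map_map]
    apply List.map_congr_left
    intro k hk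
    have hk' : k < m - c := List.mem_range.1 hk
    have hlt : phiD D k < u.length := by rw [hu]; exact hphi_lt k hk'
    simp only [Function.comp, hf]
    exact List.getD_append _ _ _ _ hlt
  have hsub : List.Sublist A u := by
    rw [hAeq]
    apply map_getD_sublist
    · rw [List.pairwise_map]
      exact List.pairwise_lt_range.imp fun h => phiD_strictMono D h
    · intro j hj
      simp only [List.mem_map, List.mem_range] at hj
      obtain ⟨k, hk, rfl⟩ := hj
      rw [hu]
      exact hphi_lt k hk
  have hlenA : A.length = m - c := by simp [hA]
  have hlenB : B.length = c := by simp [hB]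
  have := ED_sublist_append_le hsub B
  rw [← hyw] at this
  rw [hu, hlenA, hlenB] at this
  omega

lemma pmf_measure_le_one {α : Type*} (μ : PMF α) (A : Set α) : μ.toOuterMeasure A ≤ 1 := by
  rw [PMF.toOuterMeasure_apply]
  exact le_trans (ENNReal.tsum_le_tsum fun t => Set.indicator_le_self _ _ t) μ.tsum_coe.le

/-- The key per-deletion-set bound. -/
lemma key_perD {q n m : ℕ} (ε : ℝ) (hε : ε ∈ Set.Ioc (0 : ℝ) (1 / 2))
    {C : (Fin n → Bool) → Fin m → Bool}
    {Dec : ℕ → Fin n → PMF ((Fin q → ℕ) × ((Fin q → Bool) → Bool))}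
    {P : PMF (Fin m → Bool)} {D : Finset ℕ} (i : Fin n)
    (hsucc : ∀ t : (Fin n → Bool) × (Fin m → Bool),
      ENNReal.ofReal (1 / 2 + ε) ≤ (Dec m i).toOuterMeasure
        {p : (Fin q → ℕ) × ((Fin q → Bool) → Bool) |
          p.2 (fun j => (List.ofFn (C t.1) ++ List.ofFn t.2).getD (phiD D (p.1 j)) false)
            = t.1 i}) :
    ENNReal.ofReal (3 * ε / 2) ≤
      (Dec m i).toOuterMeasure {p | GoodTup C P ε i fun j => phiD D (p.1 j)} := by
  classical
  set μ : PMF ((Fin n → Bool) × (Fin m → Bool)) :=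
    (PMF.uniformOfFintype (Fin n → Bool)).bind (fun x => P.map fun pad => (x, pad)) with hμ
  set s : ((Fin q → ℕ) × ((Fin q → Bool) → Bool)) → ℝ≥0∞ := fun p =>
    μ.toOuterMeasure
      {t : (Fin n → Bool) × (Fin m → Bool) |
        p.2 (fun j => (List.ofFn (C t.1) ++ List.ofFn t.2).getD (phiD D (p.1 j)) false)
          = t.1 i} with hs
  set Good : Set ((Fin q → ℕ) × ((Fin q → Bool) → Bool)) :=
    {p | GoodTup C P ε i fun j => phiD D (p.1 j)} with hG
  set c : ℝ≥0∞ := ENNReal.ofReal (1 / 2 + ε / 4) with hcdef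
  -- Fubini
  have fub : ∑' p, (Dec m i) p * s p
      = ∑' t, μ t * (Dec m i).toOuterMeasure
          {p : (Fin q → ℕ) × ((Fin q → Bool) → Bool) |
            p.2 (fun j => (List.ofFn (C t.1) ++ List.ofFn t.2).getD (phiD D (p.1 j)) false)
              = t.1 i} := by
    simp only [hs, PMF.toOuterMeasure_apply, ← ENNReal.tsum_mul_left]
    rw [ENNReal.tsum_comm]
    refine tsum_congr fun t => tsum_congr fun p => ?_
    rw [Set.indicator_apply, Set.indicator_apply]
    simp only [Set.mem_setOf_eq]
    split_ifs with h <;> simp [mul_comm]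
  -- lower bound
  have hlow : ENNReal.ofReal (1 / 2 + ε) ≤ ∑' p, (Dec m i) p * s p := by
    rw [fub]
    calc ENNReal.ofReal (1 / 2 + ε) = ∑' t, μ t * ENNReal.ofReal (1 / 2 + ε) := by
          rw [ENNReal.tsum_mul_right, μ.tsum_coe, one_mul]
      _ ≤ _ := ENNReal.tsum_le_tsum fun t => mul_le_mul_right (hsucc t) _
  -- upper bound
  have hsle1 : ∀ p, s p ≤ 1 := fun p => pmf_measure_le_one μ _
  have hbad : ∀ p ∉ Good, s p ≤ c := by
    intro p hp
    by_contra hc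
    exact hp ⟨p.2, (not_le.1 hc).le⟩
  have hupper : ∑' p, (Dec m i) p * s p
      ≤ (Dec m i).toOuterMeasure Good + c * (Dec m i).toOuterMeasure Goodᶜ := by
    rw [PMF.toOuterMeasure_apply, PMF.toOuterMeasure_apply, ← ENNReal.tsum_mul_left,
      ← ENNReal.tsum_add]
    refine ENNReal.tsum_le_tsum fun p => ?_
    by_cases hp : p ∈ Good
    · have : (Dec m i) p * s p ≤ (Dec m i) p := by
        calc (Dec m i) p * s p ≤ (Dec m i) p * 1 := mul_le_mul_right (hsle1 p) _
          _ = (Dec m i) p := mul_one _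
      simpa [Set.indicator_of_mem hp, Set.indicator_of_notMem (by simpa using hp :
        p ∉ Goodᶜ)] using this
    · have : (Dec m i) p * s p ≤ c * (Dec m i) p := by
        rw [mul_comm]
        exact mul_le_mul_left (hbad p hp) _
      simpa [Set.indicator_of_notMem hp, Set.indicator_of_mem (by simpa using hp :
        p ∈ Goodᶜ)] using this
  -- total mass
  have hGB : (Dec m i).toOuterMeasure Good + (Dec m i).toOuterMeasure Goodᶜ = 1 := by
    rw [PMF.toOuterMeasure_apply, PMF.toOuterMeasure_apply, ← ENNReal.tsum_add]
    rw [show ∑' p, (Good.indicator (Dec m i) p + Goodᶜ.indicator (Dec m i) p)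
        = ∑' p, (Dec m i) p from tsum_congr fun p => by
          by_cases hp : p ∈ Good <;>
            simp [Set.indicator_apply, hp]]
    exact (Dec m i).tsum_coe
  set G := (Dec m i).toOuterMeasure Good with hGdef
  set B := (Dec m i).toOuterMeasure Goodᶜ with hBdef
  have hG1 : G ≤ 1 := le_trans le_self_add hGB.le
  have hB1 : B ≤ 1 := le_trans le_add_self hGB.le
  have hGne : G ≠ ⊤ := (lt_of_le_of_lt hG1 ENNReal.one_lt_top).ne
  have hBne : B ≠ ⊤ := (lt_of_le_of_lt hB1 ENNReal.one_lt_top).ne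
  have hcne : c ≠ ⊤ := ENNReal.ofReal_ne_top
  have h2 : ENNReal.ofReal (1 / 2 + ε) ≤ G + c * B := le_trans hlow hupper
  have hfin : G + c * B ≠ ⊤ := by
    refine ENNReal.add_ne_top.2 ⟨hGne, ENNReal.mul_ne_top hcne hBne⟩
  have hmain : 1 / 2 + ε ≤ G.toReal + (1 / 2 + ε / 4) * B.toReal := by
    have h3 := (ENNReal.ofReal_le_iff_le_toReal hfin).1 h2
    rwa [ENNReal.toReal_add hGne (ENNReal.mul_ne_top hcne hBne), ENNReal.toReal_mul,
      ENNReal.toReal_ofReal (by linarith [hε.1])] at h3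
  have hgb : G.toReal + B.toReal = 1 := by
    rw [← ENNReal.toReal_add hGne hBne, hGB, ENNReal.toReal_one]
  have hg : 3 * ε / 2 ≤ G.toReal := by
    have h0G : (0 : ℝ) ≤ G.toReal := ENNReal.toReal_nonneg
    have h0B : (0 : ℝ) ≤ B.toReal := ENNReal.toReal_nonneg
    nlinarith [hε.1, hε.2, mul_nonneg h0G hε.1.le]
  exact ENNReal.ofReal_le_of_le_toReal hg

/-- **hitting lemma.** Let `C` be a `(q,δ,ε)` insdel LDC with a
non-adaptive decoder `Dec` (whose queries on words of length `m` lie in `[m]`), let the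
augmented codeword append `m` padding bits distributed as `P` (independently of `x`),
and let `𝒟` be any distribution over deletion sets `D ⊆ [2m]` with `|D ∩ [m]| ≤ δm` and
`|D| ≤ m`.  Then for every `i`, the probability over `D ∼ 𝒟` and over the query tuple
`Q` of `Dec(·, m, i)` that `Q^D` is good for `i` is at least `3ε/2`. -/
theorem hitting_good_queries
    {q n m : ℕ} (δ ε : ℝ) (hδ : δ ∈ Set.Icc (0 : ℝ) 1) (hε : ε ∈ Set.Ioc (0 : ℝ) (1 / 2))
    (C : (Fin n → Bool) → Fin m → Bool)
    (Dec : ℕ → Fin n → PMF ((Fin q → ℕ) × ((Fin q → Bool) → Bool)))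
    (hDec : ∀ (x : Fin n → Bool) (y : List Bool),
      (ED (List.ofFn (C x)) y : ℝ) ≤ δ * (2 * m) →
      ∀ i : Fin n, ENNReal.ofReal (1 / 2 + ε) ≤ naSuccessProb Dec y i (x i))
    (hRange : ∀ (i : Fin n) (p : (Fin q → ℕ) × ((Fin q → Bool) → Bool)),
      p ∈ (Dec m i).support → ∀ j, p.1 j < m)
    (P : PMF (Fin m → Bool))
    (𝒟 : PMF (Finset ℕ))
    (h𝒟 : ∀ D ∈ 𝒟.support, D ⊆ Finset.range (2 * m) ∧
      ((D.filter fun j => j < m).card : ℝ) ≤ δ * m ∧ D.card ≤ m) :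
    ∀ i : Fin n,
      ENNReal.ofReal (3 * ε / 2) ≤
        ((𝒟.bind fun D => (Dec m i).map fun p => (D, p))).toOuterMeasure
          {t | GoodTup C P ε i fun j => phiD t.1 (t.2.1 j)} := by
  intro i
  have key : ∀ D ∈ 𝒟.support, ENNReal.ofReal (3 * ε / 2) ≤
      (Dec m i).toOuterMeasure {p | GoodTup C P ε i fun j => phiD D (p.1 j)} := by
    intro D hD
    obtain ⟨hDsub, hDfil, hDcard⟩ := h𝒟 D hD
    apply key_perD ε hε i
    intro t
    set L := List.ofFn (C t.1) ++ List.ofFn t.2 with hL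
    have hdm : (D.filter fun j => j < m).card ≤ m :=
      le_trans (Finset.card_filter_le _ _) hDcard
    have hED : (ED (List.ofFn (C t.1)) (yWord m D L false) : ℝ) ≤ δ * (2 * m) := by
      have h1 := yWord_ED D hdm (List.ofFn (C t.1)) (List.ofFn t.2) (by simp) false
      rw [← hL] at h1
      have h2 : ((ED (List.ofFn (C t.1)) (yWord m D L false)) : ℝ)
          ≤ 2 * ((D.filter fun j => j < m).card : ℝ) := by exact_mod_cast h1
      linarith [hDfil]
    have h0 := hDec t.1 (yWord m D L false) hED i
    simp only [naSuccessProb] at h0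
    rw [yWord_length] at h0
    refine le_trans h0 (le_of_eq ?_)
    apply PMF.toOuterMeasure_apply_eq_of_inter_support_eq
    have harg : ∀ p ∈ (Dec m i).support,
        (fun j => (yWord m D L false).getD (p.1 j) default)
          = fun j => L.getD (phiD D (p.1 j)) false := by
      intro p hp
      funext j
      have hj := hRange i p hp j
      rw [show (default : Bool) = false from rfl]
      exact yWord_getD D L false hj
    ext p
    simp only [Set.mem_inter_iff, Set.mem_setOf_eq]
    constructor
    · rintro ⟨h1, h2⟩
      refine ⟨?_, h2⟩
      rw [← harg p h2]
      exact h1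
    · rintro ⟨h1, h2⟩
      refine ⟨?_, h2⟩
      rw [harg p h2]
      exact h1
  rw [PMF.toOuterMeasure_bind_apply]
  calc ENNReal.ofReal (3 * ε / 2)
      = ∑' D, 𝒟 D * ENNReal.ofReal (3 * ε / 2) := by
        rw [ENNReal.tsum_mul_right, 𝒟.tsum_coe, one_mul]
    _ ≤ _ := by
        refine ENNReal.tsum_le_tsum fun D => ?_
        by_cases hD : D ∈ 𝒟.support
        · refine mul_le_mul_right ?_ _
          rw [PMF.toOuterMeasure_map_apply]
          exact key D hD
        · simp only [PMF.mem_support_iff, not_not] at hD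
          simp [hD]
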